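/- Suppose the dependency relation of a CBCN is acyclic and the CBCN has Property P. Then there exists a decomposition of the index set into disjoint controlled paths: a finite collection of controlled paths that are pairwise disjoint as sets of indices and whose union is all of Fin n. -/

import Mathlib

def cbcnStep {n : ℕ} (ε : Fin n → Fin n → Bool) (I : Finset (Fin n))
    (u x : Fin n → Bool) : Fin n → Bool :=
  fun i => if i ∈ I then u i else decide (∀ j : Fin n, ε j i = true → x j = true)

def cbcnTraj {n : ℕ} (ε : Fin n → Fin n → Bool) (I : Finset (Fin n))
    (u : ℕ → Fin n → Bool) (a : Fin n → Bool) : ℕ → Fin n → Bool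
  | 0 => a
  | k + 1 => cbcnStep ε I (u k) (cbcnTraj ε I u a k)

/-- The dependency relation of the CBCN: there is an arc `j → i`
iff `i ∉ I` and `ε j i = true`. -/
def depArc {n : ℕ} (ε : Fin n → Fin n → Bool) (I : Finset (Fin n))
    (j i : Fin n) : Prop :=
  i ∉ I ∧ ε j i = true

/-- A controlled path: a nonempty list of distinct indices, starting at a
directly controlled index, and such that each subsequent index is the unique
out-neighbor of its predecessor in the dependency relation. -/
def IsControlledPath {n : ℕ} (ε : Fin n → Fin n → Bool) (I : Finset (Fin n))
    (p : List (Fin n)) : Prop :=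
  p ≠ [] ∧ p.Nodup ∧ (∀ x ∈ p.head?, x ∈ I) ∧
    ∀ (t : ℕ) (ht : t + 1 < p.length),
      depArc ε I (p.get ⟨t, Nat.lt_of_succ_lt ht⟩) (p.get ⟨t + 1, ht⟩) ∧
      ∀ k : Fin n, depArc ε I (p.get ⟨t, Nat.lt_of_succ_lt ht⟩) k → k = p.get ⟨t + 1, ht⟩

/-- A decomposition of the index set into disjoint controlled paths. -/
def HasControlledPathDecomposition {n : ℕ} (ε : Fin n → Fin n → Bool)
    (I : Finset (Fin n)) : Prop :=
  ∃ C : Finset (List (Fin n)),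
    (∀ p ∈ C, IsControlledPath ε I p) ∧
    (∀ p ∈ C, ∀ q ∈ C, p ≠ q → ∀ x : Fin n, x ∈ p → x ∉ q) ∧
    (∀ i : Fin n, ∃ p ∈ C, i ∈ p)

namespace CBCNAux

open Relation

variable {α : Type*} (prev : α → Option α)

def PrevRel (a b : α) : Prop := prev b = some a

def NextRel (a b : α) : Prop := prev a = some b

noncomputable def chainTo (wf : WellFounded (PrevRel prev)) : α → List α :=
  wf.fix (fun i rec =>
    match h : prev i with
    | none => [i]
    | some j => rec j h ++ [i])

variable (wf : WellFounded (PrevRel prev))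

lemma chainTo_none {i : α} (h : prev i = none) : chainTo prev wf i = [i] := by
  unfold chainTo
  rw [WellFounded.fix_eq]
  split <;> simp_all

lemma chainTo_some {i j : α} (h : prev i = some j) :
    chainTo prev wf i = chainTo prev wf j ++ [i] := by
  conv_lhs => rw [chainTo, WellFounded.fix_eq]
  split
  · simp_all
  · next j' hj' =>
      rw [hj'] at h
      obtain rfl := Option.some.inj h
      rfl

lemma chainTo_ne_nil (i : α) : chainTo prev wf i ≠ [] := by
  cases h : prev i with
  | none => rw [chainTo_none prev wf h]; simp
  | some j => rw [chainTo_some prev wf h]; simp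

lemma mem_chainTo_self (i : α) : i ∈ chainTo prev wf i := by
  cases h : prev i with
  | none => rw [chainTo_none prev wf h]; simp
  | some j => rw [chainTo_some prev wf h]; simp

lemma chainTo_getLast (i : α) (h : chainTo prev wf i ≠ []) :
    (chainTo prev wf i).getLast h = i := by
  cases hp : prev i with
  | none => simp [List.getLast_eq_getElem, chainTo_none prev wf hp]
  | some j => simp [List.getLast_eq_getElem, chainTo_some prev wf hp]

lemma chainTo_head (i : α) : ∀ x ∈ (chainTo prev wf i).head?, prev x = none := by
  induction i using wf.induction with
  | _ i ih =>
    cases hp : prev i with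
    | none =>
      rw [chainTo_none prev wf hp]
      intro x hx
      simp at hx
      subst hx
      exact hp
    | some j =>
      rw [chainTo_some prev wf hp]
      intro x hx
      obtain ⟨a, l, hal⟩ := List.exists_cons_of_ne_nil (chainTo_ne_nil prev wf j)
      rw [hal] at hx
      simp at hx
      subst hx
      exact ih j hp a (by rw [hal]; rfl)

lemma chainTo_reflTransGen (i : α) :
    ∀ x ∈ chainTo prev wf i, ReflTransGen (PrevRel prev) x i := by
  induction i using wf.induction with
  | _ i ih =>
    cases hp : prev i with
    | none =>
      rw [chainTo_none prev wf hp]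
      intro x hx
      simp at hx
      subst hx
      exact ReflTransGen.refl
    | some j =>
      rw [chainTo_some prev wf hp]
      intro x hx
      simp at hx
      rcases hx with hx | rfl
      · exact (ih j hp x hx).tail hp
      · exact ReflTransGen.refl

lemma chainTo_nodup (i : α) : (chainTo prev wf i).Nodup := by
  induction i using wf.induction with
  | _ i ih =>
    cases hp : prev i with
    | none => rw [chainTo_none prev wf hp]; simp
    | some j =>
      rw [chainTo_some prev wf hp]
      rw [List.nodup_append]
      refine ⟨ih j hp, by simp, ?_⟩
      intro x hx b hb hxb
      simp at hb
      subst hb hxb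
      have h1 : ReflTransGen (PrevRel prev) x j := chainTo_reflTransGen prev wf j x hx
      have h2 : TransGen (PrevRel prev) x x := TransGen.tail' h1 hp
      exact (wf.transGen.isIrrefl).irrefl x h2

lemma chainTo_get (i : α) :
    ∀ (t : ℕ) (ht : t + 1 < (chainTo prev wf i).length),
      prev ((chainTo prev wf i).get ⟨t + 1, ht⟩) =
        some ((chainTo prev wf i).get ⟨t, Nat.lt_of_succ_lt ht⟩) := by
  induction i using wf.induction with
  | _ i ih =>
    cases hp : prev i with
    | none =>
      rw [chainTo_none prev wf hp]
      intro t ht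
      simp at ht
    | some j =>
      rw [chainTo_some prev wf hp]
      intro t ht
      have hL : (chainTo prev wf j ++ [i]).length = (chainTo prev wf j).length + 1 := by simp
      have hlen : 1 ≤ (chainTo prev wf j).length :=
        List.length_pos_iff.mpr (chainTo_ne_nil prev wf j)
      rw [hL] at ht
      simp only [List.get_eq_getElem]
      by_cases h : t + 1 < (chainTo prev wf j).length
      · rw [List.getElem_append_left h, List.getElem_append_left (Nat.lt_of_succ_lt h)]
        exact ih j hp t h
      · have ht1 : t + 1 = (chainTo prev wf j).length := by omega
        have e1 : (chainTo prev wf j ++ [i])[t + 1]'(by simp; omega) = i :=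
          List.getElem_concat_length ht1 _
        have e2 : (chainTo prev wf j ++ [i])[t]'(by simp; omega) = j := by
          rw [List.getElem_append_left (by omega)]
          have hgl := chainTo_getLast prev wf j (chainTo_ne_nil prev wf j)
          rw [List.getLast_eq_getElem] at hgl
          convert hgl using 2
          omega
        rw [e1, e2]
        exact hp

open Classical in
noncomputable def top (wf2 : WellFounded (NextRel prev)) : α → α :=
  wf2.fix (fun i rec => if h : ∃ m, prev m = some i then rec h.choose h.choose_spec else i)

variable (wf2 : WellFounded (NextRel prev))
variable (hinj : ∀ a b c, prev a = some c → prev b = some c → a = b)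

lemma top_of_max {i : α} (h : ¬ ∃ m, prev m = some i) : top prev wf2 i = i := by
  conv_lhs => rw [top, WellFounded.fix_eq]
  exact dif_neg h

include hinj in
lemma top_step {i m : α} (h : prev m = some i) : top prev wf2 i = top prev wf2 m := by
  conv_lhs => rw [top, WellFounded.fix_eq]
  rw [dif_pos ⟨m, h⟩]
  have hc : (⟨m, h⟩ : ∃ m, prev m = some i).choose = m :=
    hinj _ _ _ (⟨m, h⟩ : ∃ m, prev m = some i).choose_spec h
  exact congrArg (top prev wf2) hc

include hinj in
lemma top_max (i : α) : ¬ ∃ m, prev m = some (top prev wf2 i) := by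
  induction i using wf2.induction with
  | _ i ih =>
    by_cases h : ∃ m, prev m = some i
    · obtain ⟨m, hm⟩ := h
      rw [top_step prev wf2 hinj hm]
      exact ih m hm
    · rw [top_of_max prev wf2 h]
      exact h

lemma mem_chainTo_of_prev {m x : α} (hm : prev m = some x) :
    ∀ t, m ∈ chainTo prev wf t → x ∈ chainTo prev wf t := by
  intro t
  induction t using wf.induction with
  | _ t ih =>
    cases hp : prev t with
    | none =>
      rw [chainTo_none prev wf hp]
      intro h
      simp at h
      subst h
      rw [hp] at hm
      exact absurd hm (by simp)
    | some j =>
      rw [chainTo_some prev wf hp]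
      intro h
      simp at h
      rcases h with h | rfl
      · exact List.mem_append_left _ (ih j hp h)
      · rw [hp] at hm
        obtain rfl : j = x := by injection hm
        exact List.mem_append_left _ (mem_chainTo_self prev wf _)

include hinj in
lemma mem_chainTo_top (i : α) : i ∈ chainTo prev wf (top prev wf2 i) := by
  induction i using wf2.induction with
  | _ i ih =>
    by_cases h : ∃ m, prev m = some i
    · obtain ⟨m, hm⟩ := h
      rw [top_step prev wf2 hinj hm]
      exact mem_chainTo_of_prev prev wf hm _ (ih m hm)
    · rw [top_of_max prev wf2 h]
      exact mem_chainTo_self prev wf i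

include hinj in
lemma top_eq_of_mem (i : α) : ∀ x ∈ chainTo prev wf i, top prev wf2 x = top prev wf2 i := by
  induction i using wf.induction with
  | _ i ih =>
    cases hp : prev i with
    | none =>
      rw [chainTo_none prev wf hp]
      intro x hx
      simp at hx
      subst hx
      rfl
    | some j =>
      rw [chainTo_some prev wf hp]
      intro x hx
      simp at hx
      rcases hx with hx | rfl
      · rw [ih j hp x hx, top_step prev wf2 hinj hp]
      · rfl

lemma transGen_irrefl_of_no_cycle {α : Type*} (r : α → α → Prop)
    (hacyc : ¬ ∃ (k : ℕ) (c : Fin (k + 1) → α), ∀ t : Fin (k + 1), r (c t) (c (t + 1))) :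
    ∀ i, ¬ Relation.TransGen r i i := by
  have key : ∀ a b, Relation.TransGen r a b →
      ∃ (k : ℕ) (c : Fin (k + 1) → α), c 0 = a ∧
        (∀ (t : ℕ) (h : t + 1 < k + 1), r (c ⟨t, Nat.lt_of_succ_lt h⟩) (c ⟨t + 1, h⟩)) ∧
        r (c (Fin.last k)) b := by
    intro a b h
    induction h with
    | single h =>
      exact ⟨0, fun _ => a, rfl, fun t ht => absurd ht (by omega), h⟩
    | @tail b' c' hab hbc ih =>
      obtain ⟨k, c, h0, hint, hlast⟩ := ih
      refine ⟨k + 1, Fin.snoc c b', ?_, ?_, ?_⟩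
      · have e : (0 : Fin (k + 2)) = Fin.castSucc (0 : Fin (k + 1)) := rfl
        rw [e, Fin.snoc_castSucc]
        exact h0
      · intro t ht
        by_cases h' : t + 1 < k + 1
        · have e1 : (⟨t, Nat.lt_of_succ_lt ht⟩ : Fin (k + 2)) =
              Fin.castSucc ⟨t, Nat.lt_of_succ_lt h'⟩ := rfl
          have e2 : (⟨t + 1, ht⟩ : Fin (k + 2)) = Fin.castSucc ⟨t + 1, h'⟩ := rfl
          rw [e1, e2, Fin.snoc_castSucc, Fin.snoc_castSucc]
          exact hint t h'
        · have ht1 : t = k := by omega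
          subst ht1
          have e1 : (⟨t, Nat.lt_of_succ_lt ht⟩ : Fin (t + 2)) = Fin.castSucc (Fin.last t) := rfl
          have e2 : (⟨t + 1, ht⟩ : Fin (t + 2)) = Fin.last (t + 1) := rfl
          rw [e1, e2, Fin.snoc_castSucc, Fin.snoc_last]
          exact hlast
      · rw [Fin.snoc_last]
        exact hbc
  intro i hi
  obtain ⟨k, c, h0, hint, hlast⟩ := key i i hi
  refine hacyc ⟨k, c, fun t => ?_⟩
  by_cases ht : (t : ℕ) < k
  · have h1 : t + 1 = (⟨(t : ℕ) + 1, Nat.succ_lt_succ ht⟩ : Fin (k + 1)) := by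
      ext
      rw [Fin.val_add_one_of_lt]
      exact Fin.lt_iff_val_lt_val.mpr (by simpa using ht)
    rw [h1]
    have h2 : c t = c ⟨(t : ℕ), Nat.lt_of_succ_lt (Nat.succ_lt_succ ht)⟩ := by congr
    rw [h2]
    exact hint t (Nat.succ_lt_succ ht)
  · have h1 : t = Fin.last k := by
      ext
      simp only [Fin.val_last]
      omega
    subst h1
    rw [Fin.last_add_one, h0]
    exact hlast

lemma wf_of_no_cycle {α : Type*} [Finite α] (r : α → α → Prop)
    (hirr : ∀ i, ¬ Relation.TransGen r i i) : WellFounded r := by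
  haveI : IsTrans α (Relation.TransGen r) := ⟨fun _ _ _ => Relation.TransGen.trans⟩
  haveI : IsIrrefl α (Relation.TransGen r) := ⟨hirr⟩
  have wfT : WellFounded (Relation.TransGen r) := Finite.wellFounded_of_trans_of_irrefl _
  exact Subrelation.wf (fun {a b} h => Relation.TransGen.single h) wfT

end CBCNAux

/-- If the dependency relation of a CBCN is acyclic and the CBCN has Property
P, then its index set decomposes into disjoint controlled paths. -/
theorem acyclic_propertyP_decomposition {n : ℕ} (ε : Fin n → Fin n → Bool)
    (I : Finset (Fin n))
    (hacyc : ¬ ∃ (k : ℕ) (c : Fin (k + 1) → Fin n),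
        ∀ t : Fin (k + 1), depArc ε I (c t) (c (t + 1)))
    (hP : ∀ i : Fin n, i ∈ I ∨ ∃ j : Fin n,
        (∃ m : Fin n, m ≠ j ∧ depArc ε I j m ∧ ∀ k : Fin n, depArc ε I j k → k = m) ∧
        depArc ε I j i) :
    HasControlledPathDecomposition ε I := by
  classical
  have hPc : ∀ i : Fin n, i ∉ I → ∃ j, depArc ε I j i ∧ ∀ k, depArc ε I j k → k = i := by
    intro i hi
    rcases hP i with h | ⟨j, ⟨m, _, _, hm3⟩, hji⟩
    · exact absurd h hi
    · refine ⟨j, hji, fun k hk => ?_⟩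
      rw [hm3 k hk, hm3 i hji]
  set prev : Fin n → Option (Fin n) :=
    fun i => if h : i ∈ I then none else some (hPc i h).choose with hprev
  have prev_spec : ∀ i j, prev i = some j →
      depArc ε I j i ∧ ∀ k, depArc ε I j k → k = i := by
    intro i j h
    simp only [hprev] at h
    split at h
    · exact absurd h (by simp)
    · next hi =>
        obtain rfl := Option.some.inj h
        exact (hPc i hi).choose_spec
  have prev_none : ∀ i, prev i = none → i ∈ I := by
    intro i h
    simp only [hprev] at h
    split at h
    · assumption
    · exact absurd h (by simp)
  have hinj : ∀ a b c : Fin n, prev a = some c → prev b = some c → a = b := by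
    intro a b c ha hb
    exact (prev_spec b c hb).2 a (prev_spec a c ha).1
  have hirr := CBCNAux.transGen_irrefl_of_no_cycle (depArc ε I) hacyc
  have wfdep : WellFounded (depArc ε I) := CBCNAux.wf_of_no_cycle _ hirr
  have wfswap : WellFounded (Function.swap (depArc ε I)) := by
    apply CBCNAux.wf_of_no_cycle
    intro i h
    exact hirr i (Relation.transGen_swap.mpr h)
  have wf1 : WellFounded (CBCNAux.PrevRel prev) :=
    Subrelation.wf (fun {a b} h => (prev_spec b a h).1) wfdep
  have wf2 : WellFounded (CBCNAux.NextRel prev) :=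
    Subrelation.wf (fun {a b} h => (prev_spec a b h).1) wfswap
  refine ⟨Finset.image (fun m => CBCNAux.chainTo prev wf1 m)
      (Finset.univ.filter fun m => ¬ ∃ m', prev m' = some m), ?_, ?_, ?_⟩
  · intro p hp
    simp only [Finset.mem_image, Finset.mem_filter] at hp
    obtain ⟨m, -, rfl⟩ := hp
    refine ⟨CBCNAux.chainTo_ne_nil prev wf1 m, CBCNAux.chainTo_nodup prev wf1 m, ?_, ?_⟩
    · intro x hx
      exact prev_none x (CBCNAux.chainTo_head prev wf1 m x hx)
    · intro t ht
      have hg := CBCNAux.chainTo_get prev wf1 m t ht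
      have hs := prev_spec _ _ hg
      exact ⟨hs.1, fun k hk => hs.2 k hk⟩
  · intro p hp q hq hpq x hxp hxq
    simp only [Finset.mem_image, Finset.mem_filter] at hp hq
    obtain ⟨m1, ⟨-, hm1⟩, rfl⟩ := hp
    obtain ⟨m2, ⟨-, hm2⟩, rfl⟩ := hq
    have e1 := CBCNAux.top_eq_of_mem prev wf1 wf2 hinj m1 x hxp
    have e2 := CBCNAux.top_eq_of_mem prev wf1 wf2 hinj m2 x hxq
    rw [CBCNAux.top_of_max prev wf2 hm1] at e1
    rw [CBCNAux.top_of_max prev wf2 hm2] at e2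
    exact hpq (congrArg _ (e1.symm.trans e2))
  · intro i
    refine ⟨CBCNAux.chainTo prev wf1 (CBCNAux.top prev wf2 i), ?_, ?_⟩
    · simp only [Finset.mem_image, Finset.mem_filter]
      exact ⟨_, ⟨Finset.mem_univ _, CBCNAux.top_max prev wf2 hinj i⟩, rfl⟩
    · exact CBCNAux.mem_chainTo_top prev wf1 wf2 hinj i
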